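/- If all cost functions of a quantitative game are upper-semicontinuous, then every weak subgame perfect equilibrium is a subgame perfect equilibrium (hence SPE, weak SPE, and very weak SPE coincide). -/

import Mathlib

open Classical

noncomputable section

/-- A multiplayer turn-based quantitative game on a directed graph:
`owner` assigns each vertex to a player, `E` is the edge relation (every
vertex has a successor), and `cost i` is player `i`'s cost function on
infinite sequences of vertices (to be minimized), valued in `ℝ ∪ {±∞}`. -/
structure QGame (P V : Type) where
  owner : V → P
  E : V → V → Prop
  succ_exists : ∀ v, ∃ v', E v v'
  cost : P → (ℕ → V) → EReal

namespace QGame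

variable {P V : Type}

/-- An infinite play of the game: consecutive vertices are joined by edges. -/
def IsPlay (G : QGame P V) (ρ : ℕ → V) : Prop := ∀ n, G.E (ρ n) (ρ (n + 1))

/-- Concatenation `hρ` of a finite history `h` with an infinite play `ρ`. -/
def prepend (h : List V) (ρ : ℕ → V) : ℕ → V := fun n =>
  if hn : n < h.length then h.get ⟨n, hn⟩ else ρ (n - h.length)

/-- The prefix of length `n` of a play, as a list. -/
def playPrefix (ρ : ℕ → V) (n : ℕ) : List V := List.ofFn fun k : Fin n => ρ k

/-- `hv` is a history of the game initialized at `v0`: here `h` is the strict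
past and `v` the current vertex; the sequence `h ++ [v]` starts at `v0` and
follows edges. -/
def IsHist (G : QGame P V) (v0 : V) (h : List V) (v : V) : Prop :=
  (h ++ [v]).head? = some v0 ∧ List.Chain' G.E (h ++ [v])

/-- A (turn-based) strategy profile: given the past history and the current
vertex, choose the next vertex.  An individual strategy of player `i` is of
the same type; only its values at vertices owned by `i` matter. -/
abbrev Strat (P V : Type) := List V → V → V

/-- A profile/strategy is valid if it always follows edges. -/
def Valid (G : QGame P V) (σ : Strat P V) : Prop := ∀ h v, G.E v (σ h v)

/-- History/current-vertex pair produced after `n` steps of `σ` from `v`. -/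
def outcomeAux (σ : Strat P V) (v : V) : ℕ → List V × V
  | 0 => ([], v)
  | n + 1 =>
      let p := outcomeAux σ v n
      (p.1 ++ [p.2], σ p.1 p.2)

/-- The outcome play of profile `σ` from initial vertex `v`. -/
def outcome (σ : Strat P V) (v : V) (n : ℕ) : V := (outcomeAux σ v n).2

/-- The profile where player `i` unilaterally deviates to strategy `τ`
from the profile `σ`. -/
def devProf (G : QGame P V) (σ τ : Strat P V) (i : P) : Strat P V :=
  fun h v => if G.owner v = i then τ h v else σ h v

/-- The set of deviation steps of `τ` from `σ` (for player `i`, from `v`):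
positions `n` along the outcome of the deviated profile where the current
vertex belongs to player `i` and `τ` disagrees with `σ`. -/
def devSteps (G : QGame P V) (σ τ : Strat P V) (i : P) (v : V) : Set ℕ :=
  {n | G.owner (outcome (G.devProf σ τ i) v n) = i ∧
       σ (outcomeAux (G.devProf σ τ i) v n).1 (outcome (G.devProf σ τ i) v n) ≠
       τ (outcomeAux (G.devProf σ τ i) v n).1 (outcome (G.devProf σ τ i) v n)}

/-- `τ` is finitely deviating from `σ`. -/
def FinDev (G : QGame P V) (σ τ : Strat P V) (i : P) (v : V) : Prop :=
  (G.devSteps σ τ i v).Finite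

/-- `τ` is one-shot deviating from `σ`: its unique deviation step is at the
initial vertex. -/
def OneShotDev (G : QGame P V) (σ τ : Strat P V) (i : P) (v : V) : Prop :=
  G.devSteps σ τ i v = {0}

/-- Nash equilibrium of the profile `σ` from `v`, with respect to a cost
assignment `c` (no player has a profitable unilateral deviation). -/
def IsNEwith (G : QGame P V) (c : P → (ℕ → V) → EReal) (σ : Strat P V) (v : V) : Prop :=
  ∀ i τ, G.Valid τ →
    c i (outcome σ v) ≤ c i (outcome (G.devProf σ τ i) v)

/-- Weak Nash equilibrium: no profitable finitely deviating strategy. -/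
def IsWeakNEwith (G : QGame P V) (c : P → (ℕ → V) → EReal) (σ : Strat P V) (v : V) : Prop :=
  ∀ i τ, G.Valid τ → G.FinDev σ τ i v →
    c i (outcome σ v) ≤ c i (outcome (G.devProf σ τ i) v)

/-- Very weak Nash equilibrium: no profitable one-shot deviating strategy. -/
def IsVeryWeakNEwith (G : QGame P V) (c : P → (ℕ → V) → EReal) (σ : Strat P V) (v : V) : Prop :=
  ∀ i τ, G.Valid τ → G.OneShotDev σ τ i v →
    c i (outcome σ v) ≤ c i (outcome (G.devProf σ τ i) v)

/-- The strategy profile induced by `σ` in the subgame after history `h`. -/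
def subStrat (σ : Strat P V) (h : List V) : Strat P V := fun g v => σ (h ++ g) v

/-- The cost functions of the subgame after history `h`. -/
def subCost (G : QGame P V) (h : List V) : P → (ℕ → V) → EReal :=
  fun i ρ => G.cost i (prepend h ρ)

/-- Subgame perfect equilibrium: Nash equilibrium in every subgame. -/
def IsSPE (G : QGame P V) (v0 : V) (σ : Strat P V) : Prop :=
  ∀ h v, G.IsHist v0 h v → G.IsNEwith (G.subCost h) (subStrat σ h) v

/-- Weak subgame perfect equilibrium: weak NE in every subgame. -/
def IsWeakSPE (G : QGame P V) (v0 : V) (σ : Strat P V) : Prop :=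
  ∀ h v, G.IsHist v0 h v → G.IsWeakNEwith (G.subCost h) (subStrat σ h) v

/-- Very weak subgame perfect equilibrium: very weak NE in every subgame. -/
def IsVeryWeakSPE (G : QGame P V) (v0 : V) (σ : Strat P V) : Prop :=
  ∀ h v, G.IsHist v0 h v → G.IsVeryWeakNEwith (G.subCost h) (subStrat σ h) v

/-- One elimination step: `ρ` (a potential outcome in the subgame after `h`)
is erased if some player `i` controlling a vertex `ρ n` along `hρ` has an
alternative edge to some `v' ≠ ρ (n+1)` such that every play `ρ'` in the
current potential set after the extended history gives `i` a strictly
smaller cost than `hρ`. -/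
def Eset (G : QGame P V) (Pr : List V → V → Set (ℕ → V)) (h : List V) :
    Set (ℕ → V) :=
  {ρ | ∃ n v', G.E (ρ n) v' ∧ v' ≠ ρ (n + 1) ∧
      ∀ ρ' ∈ Pr (h ++ playPrefix ρ (n + 1)) v',
        G.cost (G.owner (ρ n)) (prepend (h ++ playPrefix ρ (n + 1)) ρ') <
          G.cost (G.owner (ρ n)) (prepend h ρ)}

/-- The transfinite sequence `P_α(hv)` of sets of potential outcomes of weak
Nash equilibria in the subgame `(G|_h, v)`: all plays at stage `0`, removal
of `E_α` at successors, intersections at limits. -/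
def Pset (G : QGame P V) (α : Ordinal) : List V → V → Set (ℕ → V) :=
  Ordinal.limitRecOn (motive := fun _ => List V → V → Set (ℕ → V)) α
    (fun _h v => {ρ | G.IsPlay ρ ∧ ρ 0 = v})
    (fun _ Pr => fun h v => Pr h v \ G.Eset Pr h)
    (fun α _ Pr => fun h v => ⋂ (β : Ordinal) (hβ : β < α), Pr β hβ h v)

/-- A sequence of plays converges to `ρ` (in the product topology on `V^ω`
with `V` discrete) iff every finite prefix of `ρ` is eventually a prefix of
the members of the sequence. -/
def Converges (ρs : ℕ → ℕ → V) (ρ : ℕ → V) : Prop :=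
  ∀ m, ∃ N, ∀ n ≥ N, ∀ k ≤ m, ρs n k = ρ k

/-- Upper semicontinuity of a cost function on plays. -/
def USCcost (G : QGame P V) (c : (ℕ → V) → EReal) : Prop :=
  ∀ (ρs : ℕ → ℕ → V) (ρ : ℕ → V), (∀ n, G.IsPlay (ρs n)) → G.IsPlay ρ →
    Converges ρs ρ →
      Filter.limsup (fun n => c (ρs n)) Filter.atTop ≤ c ρ

/-- A strategy (profile) is finite-memory if it is computed by a Moore
machine: a finite set `M` of memory states, updated while reading the
history, determines the move. -/
def FinMem (σ : Strat P V) : Prop :=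
  ∃ (M : Type) (_ : Finite M) (m0 : M) (upd : M → V → M) (act : M → V → V),
    ∀ h v, σ h v = act (h.foldl upd m0) v

/-- Quantitative reachability cost: the least index at which `ρ` visits the
target set `T`, and `+∞` if `T` is never visited. -/
def reachCost (T : Set V) (ρ : ℕ → V) : EReal :=
  if h : ∃ n, ρ n ∈ T then ((Nat.find h : ℕ) : EReal) else ⊤

/-- `G` is a quantitative reachability game with target sets `T i`. -/
def IsReachGame (G : QGame P V) (T : P → Set V) : Prop :=
  ∀ i ρ, G.cost i ρ = reachCost (T i) ρ

/-- The set of players that have not visited their target set along the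
history `h`. -/
def Iset (T : P → Set V) (h : List V) : Set P := {i | ∀ u ∈ h, u ∉ T i}

end QGame

namespace QGame

variable {P V : Type}

lemma playPrefix_zero (ρ : ℕ → V) : playPrefix ρ 0 = [] := rfl

lemma playPrefix_succ (ρ : ℕ → V) (n : ℕ) :
    playPrefix ρ (n + 1) = playPrefix ρ n ++ [ρ n] := by
  rw [playPrefix, List.ofFn_succ', List.concat_eq_append]
  simp [playPrefix]

lemma length_playPrefix (ρ : ℕ → V) (n : ℕ) : (playPrefix ρ n).length = n := by
  simp [playPrefix]

lemma playPrefix_getElem (ρ : ℕ → V) (n k : ℕ) (hk : k < (playPrefix ρ n).length) :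
    (playPrefix ρ n)[k] = ρ k := by
  simp [playPrefix]

lemma outcome_zero (σ : Strat P V) (v : V) : outcome σ v 0 = v := rfl

lemma outcomeAux_succ (σ : Strat P V) (v : V) (n : ℕ) :
    outcomeAux σ v (n + 1) =
      ((outcomeAux σ v n).1 ++ [(outcomeAux σ v n).2],
        σ (outcomeAux σ v n).1 (outcomeAux σ v n).2) := rfl

lemma outcomeAux_fst (σ : Strat P V) (v : V) (n : ℕ) :
    (outcomeAux σ v n).1 = playPrefix (outcome σ v) n := by
  induction n with
  | zero => rfl
  | succ n ih => rw [outcomeAux_succ, ih, playPrefix_succ]; rfl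

lemma outcome_succ (σ : Strat P V) (v : V) (n : ℕ) :
    outcome σ v (n + 1) = σ (playPrefix (outcome σ v) n) (outcome σ v n) := by
  rw [← outcomeAux_fst]; rfl

lemma outcome_isPlay (G : QGame P V) {σ : Strat P V} (hσ : G.Valid σ) (v : V) :
    G.IsPlay (outcome σ v) := by
  intro n
  rw [outcome_succ]
  exact hσ _ _

lemma aux_congr {σ₁ σ₂ : Strat P V} {v : V} {n : ℕ}
    (hag : ∀ m < n, σ₁ (outcomeAux σ₁ v m).1 (outcomeAux σ₁ v m).2 =
      σ₂ (outcomeAux σ₁ v m).1 (outcomeAux σ₁ v m).2) :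
    outcomeAux σ₁ v n = outcomeAux σ₂ v n := by
  induction n with
  | zero => rfl
  | succ n ih =>
    have ih' := ih (fun m hm => hag m (Nat.lt_succ_of_lt hm))
    rw [outcomeAux_succ, outcomeAux_succ, ← ih',
      ← hag n (Nat.lt_succ_self n)]

lemma aux_add (σ : Strat P V) (v : V) (n m : ℕ) :
    outcomeAux σ v (n + m) =
      ((outcomeAux σ v n).1 ++
          (outcomeAux (subStrat σ (outcomeAux σ v n).1) (outcome σ v n) m).1,
        outcome (subStrat σ (outcomeAux σ v n).1) (outcome σ v n) m) := by
  induction m with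
  | zero => simp [outcomeAux, outcome]
  | succ m ih =>
    rw [show n + (m + 1) = (n + m) + 1 by omega, outcomeAux_succ, ih,
      outcomeAux_succ]
    simp [outcome, outcomeAux_succ, subStrat, List.append_assoc]

lemma prepend_lt (h : List V) (ρ : ℕ → V) (n : ℕ) (hn : n < h.length) :
    prepend h ρ n = h[n] := by
  simp [prepend, hn]

lemma prepend_ge (h : List V) (ρ : ℕ → V) (n : ℕ) (hn : h.length ≤ n) :
    prepend h ρ n = ρ (n - h.length) := by
  simp [prepend, Nat.not_lt_of_le hn]

lemma prepend_append (h g : List V) (ρ : ℕ → V) :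
    prepend (h ++ g) ρ = prepend h (prepend g ρ) := by
  funext p
  rcases lt_or_ge p h.length with hp | hp
  · rw [prepend_lt _ _ _ (by simp; omega), prepend_lt _ _ _ hp,
      List.getElem_append_left hp]
  · rw [prepend_ge h _ _ hp]
    rcases lt_or_ge p (h.length + g.length) with hp2 | hp2
    · rw [prepend_lt _ _ _ (by simp; omega), prepend_lt _ _ _ (by omega),
        List.getElem_append_right hp]
    · rw [prepend_ge _ _ _ (by simp; omega), prepend_ge _ _ _ (by omega)]
      congr 1
      simp
      omega

lemma prepend_playPrefix (π : ℕ → V) (n : ℕ) (ρ : ℕ → V)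
    (hρ : ∀ m, ρ m = π (n + m)) :
    prepend (playPrefix π n) ρ = π := by
  funext p
  rcases lt_or_ge p n with hp | hp
  · rw [prepend_lt _ _ _ (by simp [length_playPrefix]; omega),
      playPrefix_getElem]
  · rw [prepend_ge _ _ _ (by simp [length_playPrefix]; omega), hρ,
      length_playPrefix]
    congr 1
    omega

lemma devProf_valid (G : QGame P V) {σ τ : Strat P V} (hσ : G.Valid σ)
    (hτ : G.Valid τ) (i : P) : G.Valid (G.devProf σ τ i) := by
  intro h v
  unfold devProf
  split <;> [exact hτ h v; exact hσ h v]

lemma subStrat_valid (G : QGame P V) {σ : Strat P V} (hσ : G.Valid σ)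
    (h : List V) : G.Valid (subStrat σ h) := fun g v => hσ (h ++ g) v

lemma isPlay_prepend (G : QGame P V) {h : List V} {v : V} {ρ : ℕ → V}
    (hh : List.Chain' G.E (h ++ [v])) (hρ : G.IsPlay ρ) (h0 : ρ 0 = v) :
    G.IsPlay (prepend h ρ) := by
  intro n
  have hchain := List.isChain_iff_getElem.mp hh
  rcases lt_or_ge (n + 1) h.length with hn | hn
  · rw [prepend_lt _ _ _ (by omega), prepend_lt _ _ _ hn]
    have := hchain n (by simp; omega)
    simpa [List.get_eq_getElem, List.getElem_append_left (by omega : n < h.length),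
      List.getElem_append_left hn] using this
  · rcases eq_or_lt_of_le hn with hn' | hn'
    · rw [prepend_lt _ _ _ (by omega), prepend_ge _ _ _ (by omega)]
      have := hchain n (by simp; omega)
      rw [show n + 1 - h.length = 0 by omega, h0]
      simpa [List.get_eq_getElem, List.getElem_append_left (by omega : n < h.length),
        List.getElem_append_right (by omega : h.length ≤ n + 1),
        show n + 1 - h.length = 0 by omega] using this
    · rw [prepend_ge _ _ _ (by omega), prepend_ge _ _ _ (by omega),
        show n + 1 - h.length = (n - h.length) + 1 by omega]
      exact hρ _

lemma isHist_extend (G : QGame P V) {v0 : V} {h : List V} {v : V}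
    (hh : G.IsHist v0 h v) {π : ℕ → V} (hπ : G.IsPlay π) (h0 : π 0 = v) (n : ℕ) :
    G.IsHist v0 (h ++ playPrefix π n) (π n) := by
  have key : ∀ m : ℕ, List.Chain' G.E (h ++ playPrefix π (m + 1)) ∧
      (h ++ playPrefix π (m + 1)).getLast? = some (π m) := by
    intro m
    induction m with
    | zero =>
      constructor
      · simpa [playPrefix_succ, playPrefix_zero, h0] using hh.2
      · simp [playPrefix_succ, playPrefix_zero, List.getLast?_concat]
    | succ m ih =>
      have heq : h ++ playPrefix π (m + 2) = (h ++ playPrefix π (m + 1)) ++ [π (m + 1)] := by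
        rw [playPrefix_succ π (m + 1)]; simp
      constructor
      · rw [heq]
        refine List.IsChain.append ih.1 (List.isChain_singleton _) ?_
        intro x hx y hy
        rw [ih.2] at hx
        simp at hx hy
        rw [← hx, ← hy]
        exact hπ m
      · rw [heq]
        exact List.getLast?_concat
  have hchain : List.Chain' G.E (h ++ playPrefix π n ++ [π n]) := by
    have := (key n).1
    rw [playPrefix_succ] at this
    simpa using this
  refine ⟨?_, hchain⟩
  have hhead := hh.1
  have hne : (playPrefix π (n + 1)).head? = some v := by
    rw [show playPrefix π (n + 1) = π 0 :: List.ofFn (fun k : Fin n => π (k + 1)) from by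
      simp [playPrefix, List.ofFn_succ]]
    simp [h0]
  rw [List.append_assoc, ← playPrefix_succ]
  cases h with
  | nil =>
    have hv : v = v0 := by simpa using hhead
    simp only [List.nil_append]
    rw [hne, hv]
  | cons a h' => simpa using hhead

end QGame

namespace QGame

variable {P V : Type}

lemma outcome_def (σ : Strat P V) (v : V) (n : ℕ) :
    outcome σ v n = (outcomeAux σ v n).2 := rfl

lemma outcomeAux_length (σ : Strat P V) (v : V) (n : ℕ) :
    (outcomeAux σ v n).1.length = n := by
  rw [outcomeAux_fst, length_playPrefix]

lemma devProf_apply (G : QGame P V) (σ τ : Strat P V) (i : P) (h : List V) (v : V) :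
    G.devProf σ τ i h v = if G.owner v = i then τ h v else σ h v := rfl

lemma devSteps_empty_outcome (G : QGame P V) (σ' τ : Strat P V) (i : P) (v : V)
    (hS : G.devSteps σ' τ i v = ∅) :
    outcome (G.devProf σ' τ i) v = outcome σ' v := by
  funext n
  have : outcomeAux (G.devProf σ' τ i) v n = outcomeAux σ' v n := by
    apply aux_congr
    intro m _
    have hm : m ∉ G.devSteps σ' τ i v := by rw [hS]; exact Set.notMem_empty m
    simp only [devSteps, Set.mem_setOf_eq, not_and] at hm
    by_cases ho : G.owner (outcome (G.devProf σ' τ i) v m) = i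
    · have heq := not_not.mp (hm ho)
      rw [outcome_def] at ho heq
      simp [devProf, ho, ← heq]
    · rw [outcome_def] at ho
      simp [devProf, ho]
  rw [outcome_def, outcome_def, this]

lemma veryWeakSPE_to_weakSPE (G : QGame P V) (v0 : V) (σ : Strat P V)
    (hσ : G.Valid σ) (hvw : G.IsVeryWeakSPE v0 σ) : G.IsWeakSPE v0 σ := by
  have key : ∀ k : ℕ, ∀ h v, G.IsHist v0 h v → ∀ (i : P) (τ : Strat P V), G.Valid τ →
      ∀ (hf : (G.devSteps (subStrat σ h) τ i v).Finite), hf.toFinset.card ≤ k →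
      G.subCost h i (outcome (subStrat σ h) v) ≤
        G.subCost h i (outcome (G.devProf (subStrat σ h) τ i) v) := by
    intro k
    induction k with
    | zero =>
      intro h v hh i τ hτ hf hcard
      have hS : G.devSteps (subStrat σ h) τ i v = ∅ := by
        have h0 := Finset.card_eq_zero.mp (Nat.le_zero.mp hcard)
        rw [← hf.coe_toFinset, h0]; simp
      rw [devSteps_empty_outcome G _ τ i v hS]
    | succ k IH =>
      intro h v hh i τ hτ hf hcard
      by_cases hS : G.devSteps (subStrat σ h) τ i v = ∅
      · rw [devSteps_empty_outcome G _ τ i v hS]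
      · set σ' := subStrat σ h with hσ'def
        set D := G.devProf σ' τ i with hDdef
        set π := outcome D v with hπdef
        have hσ'val : G.Valid σ' := G.subStrat_valid hσ h
        have hDval : G.Valid D := G.devProf_valid hσ'val hτ i
        have hπplay : G.IsPlay π := G.outcome_isPlay hDval v
        have hne : hf.toFinset.Nonempty := by
          rw [Finset.nonempty_iff_ne_empty]
          intro hc
          apply hS
          rw [← hf.coe_toFinset, hc]; simp
        set n := hf.toFinset.max' hne with hndef
        have hnS : n ∈ G.devSteps σ' τ i v := hf.mem_toFinset.mp (hf.toFinset.max'_mem hne)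
        have hmax : ∀ m ∈ G.devSteps σ' τ i v, m ≤ n := fun m hm =>
          hf.toFinset.le_max' m (hf.mem_toFinset.mpr hm)
        set g := playPrefix π n with hgdef
        set w := π n with hwdef
        have hgfst : (outcomeAux D v n).1 = g := outcomeAux_fst D v n
        have howner : G.owner w = i := hnS.1
        have hneq : σ' g w ≠ τ g w := by
          have h2 := hnS.2
          rw [hgfst] at h2
          exact h2
        have hist' : G.IsHist v0 (h ++ g) w := G.isHist_extend hh hπplay rfl n
        set σ'' := subStrat σ (h ++ g) with hσ''def
        have hσ''val : G.Valid σ'' := G.subStrat_valid hσ (h ++ g)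
        -- the one-shot deviation in the subgame at (h ++ g, w)
        set tH : Strat P V := fun g' u => if g'.length = 0 then τ g u else σ'' g' u
          with htHdef
        have htHval : G.Valid tH := by
          intro g' u
          rw [htHdef]
          dsimp only
          split
          · exact hτ g u
          · exact hσ''val g' u
        have hσ''σ' : ∀ g' u, σ'' g' u = σ' (g ++ g') u := by
          intro g' u
          simp [hσ''def, hσ'def, subStrat, List.append_assoc]
        have hone : G.devSteps σ'' tH i w = {0} := by
          ext m
          simp only [devSteps, Set.mem_setOf_eq, Set.mem_singleton_iff]
          constructor
          · intro hm
            by_contra hm0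
            have hlen : (outcomeAux (G.devProf σ'' tH i) w m).1.length = m :=
              outcomeAux_length _ _ _
            apply hm.2
            rw [htHdef]
            dsimp only
            rw [if_neg (by rw [hlen]; exact hm0)]
          · rintro rfl
            refine ⟨howner, ?_⟩
            show σ'' [] w ≠ tH [] w
            intro hc
            apply hneq
            rw [htHdef] at hc
            dsimp only at hc
            rw [if_pos (show ([] : List V).length = 0 from rfl)] at hc
            rw [hσ''σ' [] w, List.append_nil] at hc
            exact hc
        have step1 := hvw (h ++ g) w hist' i tH htHval hone
        -- identify the outcome of the one-shot deviation with the shift of π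
        have hDsub : ∀ m, outcomeAux (subStrat D g) w m =
            outcomeAux (G.devProf σ'' tH i) w m := by
          intro m
          apply aux_congr
          intro m' _
          set g' := (outcomeAux (subStrat D g) w m').1 with hg'def
          set u := (outcomeAux (subStrat D g) w m').2 with hudef
          have hwD : outcome D v n = w := by rw [hwdef, hπdef]
          have hadd := aux_add D v n m'
          rw [hgfst, hwD] at hadd
          have hg'len : g'.length = m' := by rw [hg'def, outcomeAux_length]
          show subStrat D g g' u = G.devProf σ'' tH i g' u
          have hLHS : subStrat D g g' u = D (g ++ g') u := rfl
          by_cases ho : G.owner u = i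
          · by_cases hm0 : m' = 0
            · have hg'nil : g' = [] := by rw [hg'def, hm0]; rfl
              rw [hLHS, hg'nil, List.append_nil]
              show D g u = G.devProf σ'' tH i [] u
              rw [hDdef, devProf_apply, devProf_apply, if_pos ho, if_pos ho,
                htHdef]
              dsimp only
              rw [if_pos (show ([] : List V).length = 0 from rfl)]
            · -- n + m' is not a deviation step
              have hnm : n + m' ∉ G.devSteps σ' τ i v := by
                intro hc
                have := hmax _ hc
                omega
              simp only [devSteps, Set.mem_setOf_eq, not_and] at hnm
              rw [← hDdef] at hnm
              have hu2 : outcome D v (n + m') = u := by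
                rw [outcome_def, hadd, hudef]
                rfl
              have hfst2 : (outcomeAux D v (n + m')).1 = g ++ g' := by
                rw [hadd, ← hg'def]
              have heq : σ' (g ++ g') u = τ (g ++ g') u := by
                have h5 := hnm (by rw [hu2]; exact ho)
                rw [hu2, hfst2] at h5
                exact not_not.mp h5
              rw [hLHS, hDdef, devProf_apply, devProf_apply, if_pos ho, if_pos ho,
                ← heq, htHdef]
              dsimp only
              rw [if_neg (by rw [hg'len]; exact hm0), hσ''σ' g' u]
          · rw [hLHS, hDdef, devProf_apply, devProf_apply, if_neg ho, if_neg ho,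
              hσ''σ' g' u]
        have hwD : outcome D v n = w := by rw [hwdef, hπdef]
        have ident1 : ∀ m, outcome (G.devProf σ'' tH i) w m = π (n + m) := by
          intro m
          have hadd := aux_add D v n m
          rw [hgfst, hwD] at hadd
          rw [outcome_def, ← hDsub m, hπdef, outcome_def, hadd]
          rfl
        have cost1 : G.subCost (h ++ g) i (outcome (G.devProf σ'' tH i) w) =
            G.subCost h i π := by
          simp only [subCost]
          have h9 : prepend g (outcome (G.devProf σ'' tH i) w) = π := by
            rw [hgdef]
            exact prepend_playPrefix π n _ ident1
          rw [prepend_append, h9]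
        -- the reduced deviation τ₂
        set τ₂ : Strat P V := fun g' u => if g'.length < n then τ g' u else σ' g' u
          with hτ₂def
        have hτ₂val : G.Valid τ₂ := by
          intro g' u
          rw [hτ₂def]
          dsimp only
          split
          · exact hτ g' u
          · exact hσ'val g' u
        set D₂ := G.devProf σ' τ₂ i with hD₂def
        have hD₂val : G.Valid D₂ := G.devProf_valid hσ'val hτ₂val i
        have haux2 : ∀ m ≤ n, outcomeAux D v m = outcomeAux D₂ v m := by
          intro m hm
          apply aux_congr
          intro m' hm'
          rw [hDdef, hD₂def, devProf_apply, devProf_apply]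
          by_cases ho : G.owner (outcomeAux (G.devProf σ' τ i) v m').2 = i
          · rw [if_pos ho, if_pos ho, hτ₂def]
            dsimp only
            rw [if_pos (by rw [outcomeAux_length]; omega)]
          · rw [if_neg ho, if_neg ho]
        set π₂ := outcome D₂ v with hπ₂def
        have hπ₂eq : ∀ m ≤ n, π₂ m = π m := by
          intro m hm
          rw [hπ₂def, hπdef, outcome_def, outcome_def, haux2 m hm]
        -- the deviation steps of τ₂ are contained in those of τ minus n
        have hsub : G.devSteps σ' τ₂ i v ⊆ ↑(hf.toFinset.erase n) := by
          intro m hm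
          simp only [devSteps, Set.mem_setOf_eq] at hm
          rw [← hD₂def, outcome_def] at hm
          rcases lt_trichotomy m n with h1 | h2 | h3
          · have haux := (haux2 m h1.le).symm
            rw [haux] at hm
            have hτeq : τ₂ (outcomeAux D v m).1 (outcomeAux D v m).2 =
                τ (outcomeAux D v m).1 (outcomeAux D v m).2 := by
              rw [hτ₂def]
              dsimp only
              rw [if_pos (by rw [outcomeAux_length]; exact h1)]
            rw [hτeq] at hm
            simp only [Finset.coe_erase, Set.mem_diff, Set.mem_singleton_iff,
              hf.coe_toFinset]
            refine ⟨?_, by omega⟩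
            simp only [devSteps, Set.mem_setOf_eq]
            rw [← hDdef, outcome_def]
            exact hm
          · exfalso
            apply hm.2
            rw [hτ₂def]
            dsimp only
            rw [if_neg (by rw [outcomeAux_length]; omega)]
          · exfalso
            apply hm.2
            rw [hτ₂def]
            dsimp only
            rw [if_neg (by rw [outcomeAux_length]; omega)]
        have hfin2 : (G.devSteps σ' τ₂ i v).Finite :=
          Set.Finite.subset (Finset.finite_toSet _) hsub
        have hcard2 : hfin2.toFinset.card ≤ k := by
          have hsubF : hfin2.toFinset ⊆ hf.toFinset.erase n := by
            intro x hx
            exact hsub (hfin2.mem_toFinset.mp hx)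
          calc hfin2.toFinset.card ≤ (hf.toFinset.erase n).card :=
                Finset.card_le_card hsubF
            _ = hf.toFinset.card - 1 :=
                Finset.card_erase_of_mem (hf.toFinset.max'_mem hne)
            _ ≤ k := by omega
        have step2 := IH h v hh i τ₂ hτ₂val hfin2 hcard2
        -- identify the outcome of D₂ with g followed by the outcome of σ'' from w
        have hD₂sub : ∀ m, outcomeAux (subStrat D₂ g) w m = outcomeAux σ'' w m := by
          intro m
          apply aux_congr
          intro m' _
          set g' := (outcomeAux (subStrat D₂ g) w m').1 with hg'def
          have hg'len : g'.length = m' := by rw [hg'def, outcomeAux_length]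
          show subStrat D₂ g g' _ = σ'' g' _
          have hall : ∀ u, subStrat D₂ g g' u = σ'' g' u := by
            intro u
            show D₂ (g ++ g') u = σ'' g' u
            have hglen : (g ++ g').length = n + g'.length := by
              rw [List.length_append, hgdef, length_playPrefix]
            rw [hD₂def, devProf_apply]
            by_cases ho : G.owner u = i
            · rw [if_pos ho, hτ₂def]
              dsimp only
              rw [if_neg (by rw [hglen]; omega), hσ''σ' g' u]
            · rw [if_neg ho, hσ''σ' g' u]
          exact hall _
        have haux2n : (outcomeAux D₂ v n).1 = g := by
          rw [← haux2 n le_rfl, hgfst]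
        have hw2 : outcome D₂ v n = w := by
          rw [← hπ₂def]; exact hπ₂eq n le_rfl
        have hglen : g.length = n := by rw [hgdef, length_playPrefix]
        have ident2 : π₂ = prepend g (outcome σ'' w) := by
          funext m
          rcases lt_or_ge m n with hm | hm
          · rw [prepend_lt _ _ _ (by rw [hglen]; exact hm),
              hπ₂eq m (le_of_lt hm)]
            have : g[m]'(by rw [hglen]; exact hm) = π m := by
              simp only [hgdef]
              rw [playPrefix_getElem]
            rw [this]
          · obtain ⟨j, rfl⟩ : ∃ j, m = n + j := ⟨m - n, by omega⟩
            have hadd := aux_add D₂ v n j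
            rw [haux2n, hw2] at hadd
            rw [prepend_ge _ _ _ (by rw [hglen]; omega), hglen,
              show n + j - n = j by omega, hπ₂def, outcome_def, hadd]
            have : outcome (subStrat D₂ g) w j = outcome σ'' w j := by
              rw [outcome_def, outcome_def, hD₂sub]
            rw [show ((g ++ (outcomeAux (subStrat D₂ g) w j).1,
                outcome (subStrat D₂ g) w j) : List V × V).2 =
                outcome (subStrat D₂ g) w j from rfl, this]
        have cost2 : G.subCost h i π₂ = G.subCost (h ++ g) i (outcome σ'' w) := by
          simp only [subCost]
          congr 1
          rw [ident2, prepend_append]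
        calc G.subCost h i (outcome σ' v) ≤ G.subCost h i π₂ := step2
          _ = G.subCost (h ++ g) i (outcome σ'' w) := cost2
          _ ≤ G.subCost (h ++ g) i (outcome (G.devProf σ'' tH i) w) := step1
          _ = G.subCost h i π := cost1
  intro h v hh i τ hτ hfd
  exact key hfd.toFinset.card h v hh i τ hτ hfd le_rfl

end QGame

namespace QGame

variable {P V : Type}

lemma weakSPE_to_SPE (G : QGame P V) (v0 : V) (σ : Strat P V) (hσ : G.Valid σ)
    (husc : ∀ i, G.USCcost (G.cost i)) (hw : G.IsWeakSPE v0 σ) : G.IsSPE v0 σ := by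
  intro h v hh i τ hτ
  set σ' := subStrat σ h with hσ'def
  have hσ'val : G.Valid σ' := G.subStrat_valid hσ h
  set D := G.devProf σ' τ i with hDdef
  have hDval : G.Valid D := G.devProf_valid hσ'val hτ i
  set τs : ℕ → Strat P V := fun n g' u => if g'.length < n then τ g' u else σ' g' u
    with hτsdef
  have hτsval : ∀ n, G.Valid (τs n) := by
    intro n g' u
    rw [hτsdef]
    dsimp only
    split
    · exact hτ g' u
    · exact hσ'val g' u
  set Ds : ℕ → Strat P V := fun n => G.devProf σ' (τs n) i with hDsdef
  have hfd : ∀ n, G.FinDev σ' (τs n) i v := by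
    intro n
    apply Set.Finite.subset (Set.finite_Iio n)
    intro m hm
    simp only [devSteps, Set.mem_setOf_eq] at hm
    by_contra hmn
    simp only [Set.mem_Iio, not_lt] at hmn
    apply hm.2
    rw [hτsdef]
    dsimp only
    rw [if_neg (by rw [outcomeAux_length]; omega)]
  have hstep : ∀ n, G.subCost h i (outcome σ' v) ≤
      G.subCost h i (outcome (Ds n) v) := by
    intro n
    exact hw h v hh i (τs n) (hτsval n) (hfd n)
  have hagree : ∀ n m, m ≤ n → outcomeAux (Ds n) v m = outcomeAux D v m := by
    intro n m hm
    have hmain := aux_congr (σ₁ := D) (σ₂ := Ds n) (v := v) (n := m) ?_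
    · exact hmain.symm
    intro m' hm'
    rw [hDdef, hDsdef]
    dsimp only
    rw [devProf_apply, devProf_apply]
    by_cases ho : G.owner (outcomeAux (G.devProf σ' τ i) v m').2 = i
    · rw [if_pos ho, if_pos ho, hτsdef]
      dsimp only
      rw [if_pos (by rw [outcomeAux_length]; omega)]
    · rw [if_neg ho, if_neg ho]
  have hchain : List.Chain' G.E (h ++ [v]) := hh.2
  have hρplay : G.IsPlay (prepend h (outcome D v)) :=
    G.isPlay_prepend hchain (G.outcome_isPlay hDval v) rfl
  have hρsplay : ∀ n, G.IsPlay (prepend h (outcome (Ds n) v)) := fun n =>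
    G.isPlay_prepend hchain
      (G.outcome_isPlay (G.devProf_valid hσ'val (hτsval n) i) v) rfl
  have hconv : Converges (fun n => prepend h (outcome (Ds n) v))
      (prepend h (outcome D v)) := by
    intro m
    refine ⟨m + 1, fun n hn k hk => ?_⟩
    show prepend h (outcome (Ds n) v) k = prepend h (outcome D v) k
    rcases lt_or_ge k h.length with hkh | hkh
    · rw [prepend_lt _ _ _ hkh, prepend_lt _ _ _ hkh]
    · rw [prepend_ge _ _ _ hkh, prepend_ge _ _ _ hkh,
        outcome_def, outcome_def, hagree n (k - h.length) (by omega)]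
  have husc' := husc i (fun n => prepend h (outcome (Ds n) v))
    (prepend h (outcome D v)) hρsplay hρplay hconv
  have hle : G.subCost h i (outcome σ' v) ≤
      Filter.limsup (fun n => G.cost i (prepend h (outcome (Ds n) v)))
        Filter.atTop := by
    rw [Filter.limsup_eq]
    apply le_sInf
    intro b hb
    obtain ⟨n, hn⟩ := hb.exists
    exact le_trans (hstep n) hn
  exact le_trans hle husc'

end QGame



open QGame in
/-- If all cost functions of a quantitative game are
upper-semicontinuous, then every weak subgame perfect equilibrium is a
subgame perfect equilibrium; hence the notions of SPE, weak SPE and very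
weak SPE coincide. -/
theorem usc_weakSPE_is_SPE {P V : Type} [Finite P] [Finite V]
    (G : QGame P V) (v0 : V) (σ : Strat P V) (hσ : G.Valid σ)
    (husc : ∀ i, G.USCcost (G.cost i)) :
    (G.IsWeakSPE v0 σ → G.IsSPE v0 σ) ∧
    (G.IsSPE v0 σ ↔ G.IsWeakSPE v0 σ) ∧
    (G.IsWeakSPE v0 σ ↔ G.IsVeryWeakSPE v0 σ) := by
  have h1 : G.IsWeakSPE v0 σ → G.IsSPE v0 σ := G.weakSPE_to_SPE v0 σ hσ husc
  have h2 : G.IsSPE v0 σ → G.IsWeakSPE v0 σ := by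
    intro hs h v hh i τ hτ _
    exact hs h v hh i τ hτ
  have h3 : G.IsWeakSPE v0 σ → G.IsVeryWeakSPE v0 σ := by
    intro hwk h v hh i τ hτ hos
    refine hwk h v hh i τ hτ ?_
    show (G.devSteps (subStrat σ h) τ i v).Finite
    rw [show G.devSteps (subStrat σ h) τ i v = {0} from hos]
    exact Set.finite_singleton 0
  have h4 : G.IsVeryWeakSPE v0 σ → G.IsWeakSPE v0 σ :=
    G.veryWeakSPE_to_weakSPE v0 σ hσ
  exact ⟨h1, ⟨h2, h1⟩, ⟨h3, h4⟩⟩
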